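/- There exists a finite point set S in the plane such that the 1-Gabriel graph of S is not Hamiltonian. Concretely, there is a set S of points such that the graph on S in which two points p, q are adjacent iff the closed disk with diameter pq contains at most 3 points of S (including p and q, i.e., at most 1 other point) has no Hamiltonian cycle. -/

import Mathlib

open Metric
open scoped Classical

noncomputable section

/-- A Hamiltonian cycle on the point set `S`: a cyclic ordering (an injection from
`ZMod S.card`, hence a bijection onto `S`) of all points of `S`. -/
def IsHamCycle (S : Finset (EuclideanSpace ℝ (Fin 2)))
    (c : ZMod S.card → EuclideanSpace ℝ (Fin 2)) : Prop :=
  Function.Injective c ∧ ∀ i, c i ∈ S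

/-- The distance sequence of a Hamiltonian cycle: edge lengths sorted decreasingly. -/
def dseq (S : Finset (EuclideanSpace ℝ (Fin 2)))
    (c : ZMod S.card → EuclideanSpace ℝ (Fin 2)) : List ℝ :=
  ((List.finRange S.card).map
    (fun i => dist (c ((i : ℕ) : ZMod S.card)) (c (((i : ℕ) : ZMod S.card) + 1)))).insertionSort
    (· ≥ ·)

/-- `m` is a Hamiltonian cycle on `S` minimizing lexicographically the
decreasingly-sorted sequence of its edge lengths. -/
def IsMinHamCycle (S : Finset (EuclideanSpace ℝ (Fin 2)))
    (m : ZMod S.card → EuclideanSpace ℝ (Fin 2)) : Prop :=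
  IsHamCycle S m ∧ ∀ c, IsHamCycle S c → ¬ List.Lex (· < ·) (dseq S c) (dseq S m)

/-- `p` and `q` are adjacent in the `k`-Gabriel graph of `S`: the closed disk with
diameter `pq` contains at most `k` points of `S \ {p, q}`. -/
def kGGAdj (k : ℕ) (S : Finset (EuclideanSpace ℝ (Fin 2)))
    (p q : EuclideanSpace ℝ (Fin 2)) : Prop :=
  p ∈ S ∧ q ∈ S ∧ p ≠ q ∧
    (S.filter (fun r => r ≠ p ∧ r ≠ q ∧
      r ∈ closedBall (midpoint ℝ p q) (dist p q / 2))).card ≤ k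

/-- The `k`-Gabriel graph of `S` is Hamiltonian. -/
def kGGHamiltonian (k : ℕ) (S : Finset (EuclideanSpace ℝ (Fin 2))) : Prop :=
  ∃ c, IsHamCycle S c ∧ ∀ i : ZMod S.card, kGGAdj k S (c i) (c (i + 1))

/-! ### Auxiliary material for the counterexample -/

/-- A point of the plane with given coordinates. -/
def P (a b : ℝ) : EuclideanSpace ℝ (Fin 2) := WithLp.toLp 2 ![a, b]

lemma P0 (a b : ℝ) : P a b 0 = a := rfl
lemma P1 (a b : ℝ) : P a b 1 = b := rfl

lemma P_ne_of_fst {a b c d : ℝ} (h : a ≠ c) : P a b ≠ P c d :=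
  fun he => h (congrArg (fun x : EuclideanSpace ℝ (Fin 2) => x 0) he)

lemma P_ne_of_snd {a b c d : ℝ} (h : b ≠ d) : P a b ≠ P c d :=
  fun he => h (congrArg (fun x : EuclideanSpace ℝ (Fin 2) => x 1) he)

lemma mid_apply (p q : EuclideanSpace ℝ (Fin 2)) (i : Fin 2) :
    (midpoint ℝ p q) i = (p i + q i) / 2 := by
  rw [midpoint_eq_smul_add]
  show (2:ℝ)⁻¹ * (p i + q i) = _
  ring

lemma dist_eq2 (p q : EuclideanSpace ℝ (Fin 2)) :
    dist p q = Real.sqrt ((p 0 - q 0)^2 + (p 1 - q 1)^2) := by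
  rw [EuclideanSpace.dist_eq, Fin.sum_univ_two]
  simp [Real.dist_eq, sq_abs]

lemma mem_disk_iff (p q r : EuclideanSpace ℝ (Fin 2)) :
    r ∈ closedBall (midpoint ℝ p q) (dist p q / 2) ↔
    (r 0 - (p 0 + q 0)/2)^2 + (r 1 - (p 1 + q 1)/2)^2 ≤ ((p 0 - q 0)^2 + (p 1 - q 1)^2)/4 := by
  rw [mem_closedBall, dist_eq2, dist_eq2, mid_apply, mid_apply]
  rw [show Real.sqrt ((p 0 - q 0)^2 + (p 1 - q 1)^2) / 2
      = Real.sqrt (((p 0 - q 0)^2 + (p 1 - q 1)^2)/4) by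
    rw [show ((p 0 - q 0)^2 + (p 1 - q 1)^2)/4 = ((p 0 - q 0)^2 + (p 1 - q 1)^2)/2^2 by ring,
      Real.sqrt_div', Real.sqrt_sq] <;> positivity]
  exact Real.sqrt_le_sqrt_iff (by positivity)

/-- The three "leaf" points. -/
def q1 : EuclideanSpace ℝ (Fin 2) := P 1 0
def q2 : EuclideanSpace ℝ (Fin 2) := P (-1) 2
def q3 : EuclideanSpace ℝ (Fin 2) := P (-1) (-2)
/-- The two central "blocker" points. -/
def z1 : EuclideanSpace ℝ (Fin 2) := P (1/2) 0
def z2 : EuclideanSpace ℝ (Fin 2) := P (-1/2) 0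

/-- The counterexample point set. -/
def S5 : Finset (EuclideanSpace ℝ (Fin 2)) := {q1, q2, q3, z1, z2}

lemma hq12 : q1 ≠ q2 := P_ne_of_fst (by norm_num)
lemma hq13 : q1 ≠ q3 := P_ne_of_fst (by norm_num)
lemma hq23 : q2 ≠ q3 := P_ne_of_snd (by norm_num)
lemma hq1z1 : q1 ≠ z1 := P_ne_of_fst (by norm_num)
lemma hq1z2 : q1 ≠ z2 := P_ne_of_fst (by norm_num)
lemma hq2z1 : q2 ≠ z1 := P_ne_of_fst (by norm_num)
lemma hq2z2 : q2 ≠ z2 := P_ne_of_fst (by norm_num)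
lemma hq3z1 : q3 ≠ z1 := P_ne_of_fst (by norm_num)
lemma hq3z2 : q3 ≠ z2 := P_ne_of_fst (by norm_num)
lemma hz12 : z1 ≠ z2 := P_ne_of_fst (by norm_num)

lemma S5_card : S5.card = 5 := by
  rw [S5]
  rw [Finset.card_insert_of_notMem (by
      simp only [Finset.mem_insert, Finset.mem_singleton]
      push_neg
      exact ⟨hq12, hq13, hq1z1, hq1z2⟩),
    Finset.card_insert_of_notMem (by
      simp only [Finset.mem_insert, Finset.mem_singleton]
      push_neg
      exact ⟨hq23, hq2z1, hq2z2⟩),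
    Finset.card_insert_of_notMem (by
      simp only [Finset.mem_insert, Finset.mem_singleton]
      push_neg
      exact ⟨hq3z1, hq3z2⟩),
    Finset.card_insert_of_notMem (by
      simp only [Finset.mem_singleton]
      exact hz12),
    Finset.card_singleton]

lemma z1_mem : z1 ∈ S5 := by simp [S5]
lemma z2_mem : z2 ∈ S5 := by simp [S5]

/-- The blockers lie in the diametral disk of every pair of distinct leaves. -/
lemma blockers_in_disk {p q : EuclideanSpace ℝ (Fin 2)}
    (hp : p = q1 ∨ p = q2 ∨ p = q3) (hq : q = q1 ∨ q = q2 ∨ q = q3) (hne : p ≠ q) :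
    z1 ∈ closedBall (midpoint ℝ p q) (dist p q / 2) ∧
    z2 ∈ closedBall (midpoint ℝ p q) (dist p q / 2) := by
  rcases hp with rfl | rfl | rfl <;> rcases hq with rfl | rfl | rfl <;>
    first
    | exact absurd rfl hne
    | (constructor <;>
        · rw [mem_disk_iff]
          simp only [q1, q2, q3, z1, z2, P0, P1]
          norm_num)

/-- No two distinct leaves are adjacent in the 1-Gabriel graph of `S5`. -/
lemma leaves_not_adj {p q : EuclideanSpace ℝ (Fin 2)}
    (hp : p = q1 ∨ p = q2 ∨ p = q3) (hq : q = q1 ∨ q = q2 ∨ q = q3) (hne : p ≠ q) :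
    ¬ kGGAdj 1 S5 p q := by
  rintro ⟨-, -, -, hcard⟩
  obtain ⟨h1, h2⟩ := blockers_in_disk hp hq hne
  have hz1p : z1 ≠ p := by
    rcases hp with rfl | rfl | rfl
    · exact fun h => hq1z1 h.symm
    · exact fun h => hq2z1 h.symm
    · exact fun h => hq3z1 h.symm
  have hz1q : z1 ≠ q := by
    rcases hq with rfl | rfl | rfl
    · exact fun h => hq1z1 h.symm
    · exact fun h => hq2z1 h.symm
    · exact fun h => hq3z1 h.symm
  have hz2p : z2 ≠ p := by
    rcases hp with rfl | rfl | rfl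
    · exact fun h => hq1z2 h.symm
    · exact fun h => hq2z2 h.symm
    · exact fun h => hq3z2 h.symm
  have hz2q : z2 ≠ q := by
    rcases hq with rfl | rfl | rfl
    · exact fun h => hq1z2 h.symm
    · exact fun h => hq2z2 h.symm
    · exact fun h => hq3z2 h.symm
  have hsub : ({z1, z2} : Finset (EuclideanSpace ℝ (Fin 2))) ⊆
      S5.filter (fun r => r ≠ p ∧ r ≠ q ∧
        r ∈ closedBall (midpoint ℝ p q) (dist p q / 2)) := by
    intro r hr
    rcases Finset.mem_insert.1 hr with rfl | hr
    · exact Finset.mem_filter.2 ⟨z1_mem, hz1p, hz1q, h1⟩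
    · rw [Finset.mem_singleton] at hr
      subst hr
      exact Finset.mem_filter.2 ⟨z2_mem, hz2p, hz2q, h2⟩
  have h2le : 2 ≤ (S5.filter (fun r => r ≠ p ∧ r ≠ q ∧
      r ∈ closedBall (midpoint ℝ p q) (dist p q / 2))).card := by
    calc 2 = ({z1, z2} : Finset (EuclideanSpace ℝ (Fin 2))).card := by
            rw [Finset.card_insert_of_notMem (by simpa using hz12), Finset.card_singleton]
      _ ≤ _ := Finset.card_le_card hsub
  omega

theorem stmt_16 :
    ∃ S : Finset (EuclideanSpace ℝ (Fin 2)), 3 ≤ S.card ∧ ¬ kGGHamiltonian 1 S := by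
  refine ⟨S5, by rw [S5_card]; norm_num, ?_⟩
  rintro ⟨c, ⟨hinj, hmem⟩, hadj⟩
  haveI : NeZero S5.card := ⟨by rw [S5_card]; norm_num⟩
  -- c is surjective onto S5
  have hsurj : ∀ p ∈ S5, ∃ i, c i = p := by
    have hbij : Function.Bijective (fun i : ZMod S5.card => (⟨c i, hmem i⟩ : S5)) := by
      rw [Fintype.bijective_iff_injective_and_card]
      constructor
      · intro a b hab
        exact hinj (congrArg Subtype.val hab)
      · rw [ZMod.card, Fintype.card_coe]
    intro p hp
    obtain ⟨i, hi⟩ := hbij.2 ⟨p, hp⟩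
    exact ⟨i, congrArg Subtype.val hi⟩
  -- leaf set
  set Lf : Finset (EuclideanSpace ℝ (Fin 2)) := {q1, q2, q3} with hLf
  have hLf_card : Lf.card = 3 := by
    rw [hLf, Finset.card_insert_of_notMem (by
        simp only [Finset.mem_insert, Finset.mem_singleton]
        push_neg
        exact ⟨hq12, hq13⟩),
      Finset.card_insert_of_notMem (by simpa using hq23), Finset.card_singleton]
  set T : Finset (ZMod S5.card) := Finset.univ.filter (fun i => c i ∈ Lf) with hT
  have hT_card : T.card = 3 := by
    have himg : T.image c = Lf := by
      apply Finset.Subset.antisymm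
      · intro p hp
        obtain ⟨i, hi, rfl⟩ := Finset.mem_image.1 hp
        exact (Finset.mem_filter.1 hi).2
      · intro p hp
        have hpS : p ∈ S5 := by
          rcases (by simpa [hLf] using hp : p = q1 ∨ p = q2 ∨ p = q3) with rfl | rfl | rfl <;>
            simp [S5]
        obtain ⟨i, rfl⟩ := hsurj p hpS
        exact Finset.mem_image.2 ⟨i, Finset.mem_filter.2 ⟨Finset.mem_univ i, hp⟩, rfl⟩
    rw [← hLf_card, ← himg, Finset.card_image_of_injective T hinj]
  -- successor of a leaf position is a blocker
  have hsucc : ∀ i ∈ T, c (i + 1) ∈ ({z1, z2} : Finset (EuclideanSpace ℝ (Fin 2))) := by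
    intro i hi
    have hci : c i ∈ Lf := (Finset.mem_filter.1 hi).2
    have hadj' := hadj i
    have hmem' : c (i + 1) ∈ S5 := hmem (i + 1)
    have hne : c i ≠ c (i + 1) := hadj'.2.2.1
    have : c (i + 1) = q1 ∨ c (i + 1) = q2 ∨ c (i + 1) = q3 ∨ c (i + 1) = z1 ∨
        c (i + 1) = z2 := by simpa [S5] using hmem'
    rcases this with h | h | h | h | h
    · exact absurd hadj' (leaves_not_adj (by simpa [hLf] using hci) (Or.inl h) hne)
    · exact absurd hadj' (leaves_not_adj (by simpa [hLf] using hci) (Or.inr (Or.inl h)) hne)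
    · exact absurd hadj' (leaves_not_adj (by simpa [hLf] using hci) (Or.inr (Or.inr h)) hne)
    · simp [h]
    · simp [h]
  -- counting contradiction
  have hinj2 : Function.Injective (fun i : ZMod S5.card => c (i + 1)) :=
    hinj.comp (add_left_injective 1)
  have hsub2 : T.image (fun i => c (i + 1)) ⊆ ({z1, z2} : Finset (EuclideanSpace ℝ (Fin 2))) := by
    intro p hp
    obtain ⟨i, hi, rfl⟩ := Finset.mem_image.1 hp
    exact hsucc i hi
  have h3le : (3 : ℕ) ≤ 2 := by
    calc (3 : ℕ) = T.card := hT_card.symm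
      _ = (T.image (fun i => c (i + 1))).card := (Finset.card_image_of_injective T hinj2).symm
      _ ≤ ({z1, z2} : Finset (EuclideanSpace ℝ (Fin 2))).card := Finset.card_le_card hsub2
      _ ≤ 2 := Finset.card_insert_le _ _ |>.trans (by simp)
  omega

end
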